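/- Conversely, if a nonnegative m×n matrix X has a Hadamard square root M of rank k (M_{ij}² = X_{ij}, rank(M) = k), then X admits a PSD factorization of size k in which every factor has rank at most one: writing M = 𝐀ᵀ𝐁 with 𝐀 ∈ ℝ^{k×m}, 𝐁 ∈ ℝ^{k×n} and setting Aⁱ = aⁱ(aⁱ)ᵀ, Bʲ = bʲ(bʲ)ᵀ for the columns aⁱ of 𝐀 and bʲ of 𝐁, one has trace(AⁱBʲ) = X_{ij}. Hence the psd-rank of X is at most its square root rank. -/

import Mathlib

open Matrix BigOperators

lemma vecMulVec_posSemidef {k : ℕ} (u : Fin k → ℝ) :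
    (Matrix.vecMulVec u u).PosSemidef := by
  rw [Matrix.vecMulVec_eq Unit]
  have : Matrix.replicateRow Unit u = (Matrix.replicateCol Unit u)ᴴ := by
    ext i j; simp [Matrix.replicateRow, Matrix.replicateCol]
  rw [this]
  exact Matrix.posSemidef_self_mul_conjTranspose _

lemma vecMulVec_rank_le_one {k : ℕ} (u v : Fin k → ℝ) :
    (Matrix.vecMulVec u v).rank ≤ 1 := by
  rw [Matrix.vecMulVec_eq Unit]
  calc (Matrix.replicateCol Unit u * Matrix.replicateRow Unit v).rank
      ≤ (Matrix.replicateCol Unit u).rank := Matrix.rank_mul_le_left _ _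
    _ ≤ Fintype.card Unit := Matrix.rank_le_card_width _
    _ = 1 := by simp

lemma trace_vecMulVec_mul {k : ℕ} (u v : Fin k → ℝ) :
    ((Matrix.vecMulVec u u) * (Matrix.vecMulVec v v)).trace = (∑ t, u t * v t) ^ 2 := by
  simp only [Matrix.trace, Matrix.diag, Matrix.mul_apply, Matrix.vecMulVec_apply, sq,
    Finset.sum_mul_sum]
  rw [Finset.sum_comm]
  refine Finset.sum_congr rfl fun s _ => Finset.sum_congr rfl fun t _ => by ring

theorem hadamard_sqrt_gives_rank_one_psd_factorization
    {m n k : ℕ} (X : Matrix (Fin m) (Fin n) ℝ) (hX : ∀ i j, 0 ≤ X i j)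
    (M : Matrix (Fin m) (Fin n) ℝ)
    (hM : ∀ i j, (M i j) ^ 2 = X i j) (hrank : M.rank = k) :
    ∃ (A : Fin m → Matrix (Fin k) (Fin k) ℝ) (B : Fin n → Matrix (Fin k) (Fin k) ℝ),
      (∀ i, (A i).PosSemidef) ∧ (∀ j, (B j).PosSemidef) ∧
      (∀ i, (A i).rank ≤ 1) ∧ (∀ j, (B j).rank ≤ 1) ∧
      (∀ i j, X i j = ((A i) * (B j)).trace) := by
  classical
  set f := M.mulVecLin with hf
  have hfin : Module.finrank ℝ (LinearMap.range f) = k := hrank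
  let b : Module.Basis (Fin k) ℝ (LinearMap.range f) := Module.finBasisOfFinrankEq ℝ _ hfin
  let a : Fin m → Fin k → ℝ := fun i t => (b t : Fin m → ℝ) i
  let c : Fin n → Fin k → ℝ := fun j t =>
    b.repr ⟨f (Pi.single j 1), LinearMap.mem_range_self f _⟩ t
  have key : ∀ i j, M i j = ∑ t, a i t * c j t := by
    intro i j
    have hx : (∑ t, b.repr ⟨f (Pi.single j 1), LinearMap.mem_range_self f _⟩ t • b t
        : LinearMap.range f) = ⟨f (Pi.single j 1), LinearMap.mem_range_self f _⟩ :=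
      b.sum_repr _
    have hx' := congrArg (fun x : LinearMap.range f => (x : Fin m → ℝ) i) hx
    simp only [AddSubmonoid.coe_finset_sum, Finset.sum_apply] at hx'
    have hM' : (f (Pi.single j 1) : Fin m → ℝ) i = M i j := by
      show (M *ᵥ Pi.single j 1) i = M i j; simp
    rw [hM'] at hx'
    rw [← hx', Submodule.coe_sum, Finset.sum_apply]
    refine Finset.sum_congr rfl fun t _ => ?_
    simp [a, c, mul_comm]
  refine ⟨fun i => Matrix.vecMulVec (a i) (a i), fun j => Matrix.vecMulVec (c j) (c j),
    fun i => vecMulVec_posSemidef _, fun j => vecMulVec_posSemidef _,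
    fun i => vecMulVec_rank_le_one _ _, fun j => vecMulVec_rank_le_one _ _, fun i j => ?_⟩
  rw [trace_vecMulVec_mul, ← key, hM]
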